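/- Let 1 ≤ p < ∞ and s ∈ ℝ with (s−1)p ≤ −1. Then almost surely sup_{j≥0} ( Σ_{|n|∼2^j} ⟨n⟩^{sp} |n|^{−p} |g_n|^p )^{1/p} < ∞; that is, the Fourier–Wiener series u belongs almost surely to the Fourier–Besov space b̂^s_{p,∞}(𝕋), including the endpoint case (s−1)p = −1. -/

import Mathlib

open MeasureTheory ProbabilityTheory Filter

noncomputable section

/-- The family `(gₙ)_{n ∈ ℤ ∖ {0}}` is a family of independent standard complex-valued
Gaussian random variables: writing `gₙ = aₙ + i bₙ`, all the real and imaginary parts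
`aₙ, bₙ` (for `n ≠ 0`) are mutually independent standard real `N(0,1)` Gaussians. -/
def IsStdComplexGaussianFamily {Ω : Type*} [MeasurableSpace Ω] (P : Measure Ω)
    (g : ℤ → Ω → ℂ) : Prop :=
  iIndepFun (m := fun _ => (inferInstance : MeasurableSpace ℝ))
    (fun i : {n : ℤ // n ≠ 0} × Bool => fun ω =>
      if i.2 then (g (i.1 : ℤ) ω).re else (g (i.1 : ℤ) ω).im) P ∧
  ∀ i : {n : ℤ // n ≠ 0} × Bool,
    P.map (fun ω => if i.2 then (g (i.1 : ℤ) ω).re else (g (i.1 : ℤ) ω).im)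
      = gaussianReal 0 1

/-- The dyadic block `{n ∈ ℤ : 2^{j-1} < |n| ≤ 2^j}` (i.e. `|n| ∼ 2^j`). -/
def dyadicBlock (j : ℕ) : Finset ℤ :=
  (Finset.Icc (-(2 ^ j : ℤ)) (2 ^ j)).filter fun n => (2 : ℤ) ^ j < 2 * |n| ∧ |n| ≤ 2 ^ j

/-- The `j`-th block piece of the Fourier–Besov norm of the Fourier–Wiener series:
`( Σ_{|n| ∼ 2^j} ⟨n⟩^{sp} |n|^{-p} aₙ^p )^{1/p}`, where `aₙ = |gₙ(ω)|`. -/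
def fbBlock (a : ℤ → ℝ) (p s : ℝ) (j : ℕ) : ℝ :=
  (∑ n ∈ dyadicBlock j,
      (1 + (n : ℝ) ^ 2) ^ (s * p / 2) * |(n : ℝ)| ^ (-p) * a n ^ p) ^ (1 / p)

/-! ### Auxiliary lemmas -/

section Aux

open Real Set

lemma myInt_abs_rpow_gauss {b : ℝ} (hb : 0 < b) {s : ℝ} (hs : -1 < s) :
    Integrable fun x : ℝ => |x| ^ s * Real.exp (-b * x ^ 2) := by
  have h0 : IntegrableOn (fun x : ℝ => |x| ^ s * Real.exp (-b * x ^ 2)) (Ioi 0) := by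
    refine (integrableOn_rpow_mul_exp_neg_mul_sq hb hs).congr_fun ?_ measurableSet_Ioi
    intro x hx
    simp only [Set.mem_Ioi] at hx
    simp only []
    rw [abs_of_pos hx]
  rw [← integrableOn_univ, ← @Iio_union_Ici _ _ (0 : ℝ), integrableOn_union,
    integrableOn_Ici_iff_integrableOn_Ioi]
  refine ⟨?_, h0⟩
  rw [← (Measure.measurePreserving_neg (volume : Measure ℝ)).integrableOn_comp_preimage
      (Homeomorph.neg ℝ).measurableEmbedding]
  simp only [Function.comp_def, neg_sq, neg_preimage, neg_Iio, neg_neg, neg_zero, abs_neg]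
  exact h0

lemma myGaussMoment {p : ℝ} (hp : 0 ≤ p) :
    Integrable (fun x => |x| ^ p) (gaussianReal 0 1) := by
  rw [gaussianReal_of_var_ne_zero 0 one_ne_zero,
    integrable_withDensity_iff (measurable_gaussianPDF 0 1)
      (Filter.Eventually.of_forall fun x => ENNReal.ofReal_lt_top)]
  have : ∀ x : ℝ, |x| ^ p * (gaussianPDF 0 1 x).toReal
      = (√(2 * π))⁻¹ * (|x| ^ p * Real.exp (-(2⁻¹ : ℝ) * x ^ 2)) := by
    intro x
    rw [gaussianPDF, ENNReal.toReal_ofReal (gaussianPDFReal_nonneg _ _ _), gaussianPDFReal]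
    push_cast
    ring_nf
  simp only [this]
  exact (myInt_abs_rpow_gauss (by norm_num) (lt_of_lt_of_le neg_one_lt_zero hp)).const_mul _

lemma myIIndepFun_congr {Ω ι : Type*} [Countable ι] [MeasurableSpace Ω] {P : Measure Ω}
    {β : ι → Type*} {m : ∀ i, MeasurableSpace (β i)} {f f' : ∀ i, Ω → β i}
    (h : iIndepFun (m := m) f P) (heq : ∀ i, f i =ᵐ[P] f' i) : iIndepFun (m := m) f' P := by
  rw [iIndepFun_iff_measure_inter_preimage_eq_mul] at h ⊢
  intro S sets hsets
  have hae : ∀ᵐ ω ∂P, ∀ i, f i ω = f' i ω := ae_all_iff.2 heq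
  have h1 : ∀ i : ι, (f i ⁻¹' sets i : Set Ω) =ᵐ[P] (f' i ⁻¹' sets i : Set Ω) := by
    intro i
    filter_upwards [heq i] with ω hω
    show (f i ω ∈ sets i) = (f' i ω ∈ sets i)
    rw [hω]
  have h2 : ((⋂ i ∈ S, f i ⁻¹' sets i : Set Ω) : Set Ω)
      =ᵐ[P] (⋂ i ∈ S, f' i ⁻¹' sets i : Set Ω) := by
    filter_upwards [hae] with ω hω
    show (ω ∈ ⋂ i ∈ S, f i ⁻¹' sets i) = (ω ∈ ⋂ i ∈ S, f' i ⁻¹' sets i)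
    simp only [eq_iff_iff, Set.mem_iInter, Set.mem_preimage]
    exact ⟨fun hh i hi => hω i ▸ hh i hi, fun hh i hi => (hω i).symm ▸ hh i hi⟩
  rw [← measure_congr h2, h S hsets]
  exact Finset.prod_congr rfl fun i _ => measure_congr (h1 i)

def myEnum (k : ℕ) : ℤ := if k % 2 = 0 then (k : ℤ) / 2 + 1 else -((k : ℤ) / 2 + 1)

def myIdx (n : ℤ) : ℕ := 2 * (n.natAbs - 1) + if 0 < n then 0 else 1

lemma myEnum_ne_zero (k : ℕ) : myEnum k ≠ 0 := by unfold myEnum; split <;> omega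

lemma myEnum_injective : Function.Injective myEnum := by
  intro k l h
  unfold myEnum at h
  split_ifs at h <;> omega

lemma myEnum_myIdx {n : ℤ} (hn : n ≠ 0) : myEnum (myIdx n) = n := by
  have h1 : 1 ≤ n.natAbs := by omega
  have h2 : (n.natAbs : ℤ) = |n| := Int.abs_eq_natAbs n |>.symm
  unfold myEnum myIdx
  split_ifs <;> push_cast <;> omega

lemma myIdx_lt {n : ℤ} {j : ℕ} (h : |n| ≤ 2 ^ j) : myIdx n < 2 ^ (j + 1) := by
  have h2 : (n.natAbs : ℤ) = |n| := Int.abs_eq_natAbs n |>.symm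
  have h3 : (1 : ℤ) ≤ 2 ^ j := one_le_pow₀ one_le_two
  have h4 : n.natAbs ≤ 2 ^ j := by
    have : ((2:ℤ) ^ j) = ((2 ^ j : ℕ) : ℤ) := by push_cast; ring
    omega
  have h5 : (1:ℕ) ≤ 2 ^ j := Nat.one_le_two_pow
  unfold myIdx
  have : 2 ^ (j+1) = 2 * 2 ^ j := by ring
  split_ifs <;> omega

lemma myCoeff_bound {p s : ℝ} (hp : 1 ≤ p) (hsp : (s - 1) * p ≤ -1) {x : ℝ} (hx : 1 ≤ x) :
    (1 + x ^ 2) ^ (s * p / 2) * x ^ (-p) ≤ 2 ^ (|s| * p / 2) * x⁻¹ := by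
  have hxp : (0 : ℝ) < x := lt_of_lt_of_le zero_lt_one hx
  have hp0 : (0 : ℝ) ≤ p := le_trans zero_le_one hp
  have hC1 : (1 : ℝ) ≤ 2 ^ (|s| * p / 2) :=
    Real.one_le_rpow one_le_two (by positivity)
  have hx2 : (x ^ 2 : ℝ) ^ (s * p / 2) = x ^ (s * p) := by
    rw [← Real.rpow_natCast x 2, ← Real.rpow_mul hxp.le]
    norm_num
    ring_nf
  have key : (1 + x ^ 2) ^ (s * p / 2) ≤ 2 ^ (|s| * p / 2) * x ^ (s * p) := by
    rcases le_or_gt 0 (s * p) with h | h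
    · calc (1 + x ^ 2) ^ (s * p / 2) ≤ (2 * x ^ 2) ^ (s * p / 2) :=
            Real.rpow_le_rpow (by positivity) (by nlinarith) (by positivity)
        _ = 2 ^ (s * p / 2) * x ^ (s * p) := by
            rw [Real.mul_rpow (by norm_num) (by positivity), hx2]
        _ ≤ 2 ^ (|s| * p / 2) * x ^ (s * p) := by
            have hs : s * p ≤ |s| * p := mul_le_mul_of_nonneg_right (le_abs_self s) hp0
            exact mul_le_mul_of_nonneg_right
              (Real.rpow_le_rpow_of_exponent_le one_le_two (by linarith))
              (Real.rpow_nonneg hxp.le _)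
    · calc (1 + x ^ 2) ^ (s * p / 2) ≤ (x ^ 2) ^ (s * p / 2) := by
            apply Real.rpow_le_rpow_of_nonpos (by positivity) (by nlinarith) (by nlinarith)
        _ = x ^ (s * p) := hx2
        _ ≤ 2 ^ (|s| * p / 2) * x ^ (s * p) := by
            nlinarith [Real.rpow_nonneg hxp.le (s * p)]
  calc (1 + x ^ 2) ^ (s * p / 2) * x ^ (-p)
      ≤ 2 ^ (|s| * p / 2) * x ^ (s * p) * x ^ (-p) := by
        have : (0:ℝ) ≤ x ^ (-p) := Real.rpow_nonneg hxp.le _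
        exact mul_le_mul_of_nonneg_right key this
    _ = 2 ^ (|s| * p / 2) * x ^ ((s - 1) * p) := by
        rw [mul_assoc, ← Real.rpow_add hxp]
        ring_nf
    _ ≤ 2 ^ (|s| * p / 2) * x⁻¹ := by
        rw [← Real.rpow_neg_one x]
        exact mul_le_mul_of_nonneg_left
          (Real.rpow_le_rpow_of_exponent_le hx (by linarith))
          (Real.rpow_nonneg (by norm_num) _)

lemma myPhiBound {p : ℝ} (hp0 : 0 ≤ p) (x y : ℝ) :
    Real.sqrt (x ^ 2 + y ^ 2) ^ p ≤ 2 ^ p * (|x| ^ p + |y| ^ p) := by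
  have h1 : Real.sqrt (x ^ 2 + y ^ 2) ≤ |x| + |y| := by
    have h : x ^ 2 + y ^ 2 ≤ (|x| + |y|) ^ 2 := by
      nlinarith [mul_nonneg (abs_nonneg x) (abs_nonneg y), sq_abs x, sq_abs y]
    calc Real.sqrt (x ^ 2 + y ^ 2) ≤ Real.sqrt ((|x| + |y|) ^ 2) := Real.sqrt_le_sqrt h
      _ = |x| + |y| := Real.sqrt_sq (by positivity)
  have h2p : (0:ℝ) ≤ 2 ^ p * |x| ^ p ∧ (0:ℝ) ≤ 2 ^ p * |y| ^ p :=
    ⟨by positivity, by positivity⟩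
  rcases le_total |x| |y| with h | h
  · calc Real.sqrt (x ^ 2 + y ^ 2) ^ p ≤ (2 * |y|) ^ p :=
        Real.rpow_le_rpow (Real.sqrt_nonneg _) (h1.trans (by linarith)) hp0
      _ = 2 ^ p * |y| ^ p := Real.mul_rpow (by norm_num) (abs_nonneg _)
      _ ≤ 2 ^ p * (|x| ^ p + |y| ^ p) := by nlinarith [h2p.1, h2p.2]
  · calc Real.sqrt (x ^ 2 + y ^ 2) ^ p ≤ (2 * |x|) ^ p :=
        Real.rpow_le_rpow (Real.sqrt_nonneg _) (h1.trans (by linarith)) hp0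
      _ = 2 ^ p * |x| ^ p := Real.mul_rpow (by norm_num) (abs_nonneg _)
      _ ≤ 2 ^ p * (|x| ^ p + |y| ^ p) := by nlinarith [h2p.1, h2p.2]

lemma myBlock_bound {p s : ℝ} (hp : 1 ≤ p) (hsp : (s - 1) * p ≤ -1) (a : ℤ → ℝ)
    (ha : ∀ n, 0 ≤ a n) (Y : ℕ → ℝ) (hY : ∀ n : ℤ, n ≠ 0 → a n ^ p = Y (myIdx n))
    (hYnn : ∀ k, 0 ≤ Y k) (S : ℝ)
    (hS : ∀ N : ℕ, (∑ k ∈ Finset.range N, Y k) / N ≤ S) (j : ℕ) :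
    fbBlock a p s j ≤ (2 ^ (|s| * p / 2) * (4 * S)) ^ (1 / p) := by
  have hp0 : (0:ℝ) ≤ p := le_trans zero_le_one hp
  have hC0 : (0:ℝ) < 2 ^ (|s| * p / 2) := Real.rpow_pos_of_pos two_pos _
  have h2j : (0:ℝ) < 2 ^ j := by positivity
  have hmem : ∀ n ∈ dyadicBlock j, n ≠ 0 ∧ (2:ℤ) ^ j < 2 * |n| ∧ |n| ≤ 2 ^ j := by
    intro n hn
    rw [dyadicBlock, Finset.mem_filter] at hn
    refine ⟨?_, hn.2⟩
    rintro rfl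
    have := hn.2.1
    simp at this
    have : (0:ℤ) < 2 ^ j := by positivity
    omega
  -- bound the sum
  have hsum : (∑ n ∈ dyadicBlock j,
      (1 + (n : ℝ) ^ 2) ^ (s * p / 2) * |(n : ℝ)| ^ (-p) * a n ^ p)
      ≤ 2 ^ (|s| * p / 2) * (4 * S) := by
    have step1 : (∑ n ∈ dyadicBlock j,
        (1 + (n : ℝ) ^ 2) ^ (s * p / 2) * |(n : ℝ)| ^ (-p) * a n ^ p)
        ≤ ∑ n ∈ dyadicBlock j, (2 ^ (|s| * p / 2) * (2 / 2 ^ j)) * a n ^ p := by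
      apply Finset.sum_le_sum
      intro n hn
      obtain ⟨hn0, hlt, hle⟩ := hmem n hn
      have hx1 : (1:ℝ) ≤ |(n:ℝ)| := by
        have : (1:ℤ) ≤ |n| := by
          have : (0:ℤ) < 2 ^ j := by positivity
          omega
        calc (1:ℝ) ≤ ((|n| : ℤ) : ℝ) := by exact_mod_cast this
          _ = |(n:ℝ)| := by push_cast; rfl
      have hxpos : (0:ℝ) < |(n:ℝ)| := lt_of_lt_of_le zero_lt_one hx1
      have hcoeff : (1 + (n : ℝ) ^ 2) ^ (s * p / 2) * |(n : ℝ)| ^ (-p)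
          ≤ 2 ^ (|s| * p / 2) * (2 / 2 ^ j) := by
        have h1 : (1 + (n : ℝ) ^ 2) ^ (s * p / 2) * |(n : ℝ)| ^ (-p)
            ≤ 2 ^ (|s| * p / 2) * |(n:ℝ)|⁻¹ := by
          have := myCoeff_bound hp hsp hx1
          rwa [sq_abs] at this
        refine h1.trans (mul_le_mul_of_nonneg_left ?_ hC0.le)
        -- |(n:ℝ)|⁻¹ ≤ 2 / 2^j
        have hlt' : (2:ℝ) ^ j < 2 * |(n:ℝ)| := by exact_mod_cast hlt
        rw [inv_le_comm₀ hxpos (by positivity), inv_div]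
        linarith
      exact mul_le_mul_of_nonneg_right hcoeff (Real.rpow_nonneg (ha n) p)
    have step3 : (∑ n ∈ dyadicBlock j, a n ^ p)
        ≤ ∑ k ∈ Finset.range (2 ^ (j + 1)), Y k := by
      have e1 : (∑ n ∈ dyadicBlock j, a n ^ p) = ∑ n ∈ dyadicBlock j, Y (myIdx n) := by
        apply Finset.sum_congr rfl
        intro n hn
        exact hY n (hmem n hn).1
      have hinj : ∀ n ∈ dyadicBlock j, ∀ m ∈ dyadicBlock j, myIdx n = myIdx m → n = m := by
        intro n hn m hm hnm
        have h1 := myEnum_myIdx (hmem n hn).1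
        have h2 := myEnum_myIdx (hmem m hm).1
        rw [← h1, ← h2, hnm]
      rw [e1, ← Finset.sum_image (g := myIdx) (f := Y) hinj]
      apply Finset.sum_le_sum_of_subset_of_nonneg
      · intro k hk
        rw [Finset.mem_image] at hk
        obtain ⟨n, hn, rfl⟩ := hk
        exact Finset.mem_range.2 (myIdx_lt (hmem n hn).2.2)
      · exact fun k _ _ => hYnn k
    have hSj := hS (2 ^ (j + 1))
    have hN : ((2 ^ (j + 1) : ℕ) : ℝ) = 2 * 2 ^ j := by push_cast; ring
    have hSum_nonneg : (0:ℝ) ≤ ∑ k ∈ Finset.range (2 ^ (j + 1)), Y k :=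
      Finset.sum_nonneg fun k _ => hYnn k
    calc (∑ n ∈ dyadicBlock j,
        (1 + (n : ℝ) ^ 2) ^ (s * p / 2) * |(n : ℝ)| ^ (-p) * a n ^ p)
        ≤ ∑ n ∈ dyadicBlock j, (2 ^ (|s| * p / 2) * (2 / 2 ^ j)) * a n ^ p := step1
      _ = (2 ^ (|s| * p / 2) * (2 / 2 ^ j)) * ∑ n ∈ dyadicBlock j, a n ^ p := by
          rw [Finset.mul_sum]
      _ ≤ (2 ^ (|s| * p / 2) * (2 / 2 ^ j)) * ∑ k ∈ Finset.range (2 ^ (j + 1)), Y k := by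
          apply mul_le_mul_of_nonneg_left step3
          positivity
      _ = 2 ^ (|s| * p / 2) * (4 * ((∑ k ∈ Finset.range (2 ^ (j + 1)), Y k)
            / ((2 ^ (j + 1) : ℕ) : ℝ))) := by
          rw [hN]
          field_simp
          ring
      _ ≤ 2 ^ (|s| * p / 2) * (4 * S) := by
          apply mul_le_mul_of_nonneg_left _ hC0.le
          apply mul_le_mul_of_nonneg_left hSj (by norm_num)
  have hsum_nonneg : (0:ℝ) ≤ ∑ n ∈ dyadicBlock j,
      (1 + (n : ℝ) ^ 2) ^ (s * p / 2) * |(n : ℝ)| ^ (-p) * a n ^ p := by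
    apply Finset.sum_nonneg
    intro n _
    exact mul_nonneg (mul_nonneg (Real.rpow_nonneg (by positivity) _)
      (Real.rpow_nonneg (abs_nonneg _) _)) (Real.rpow_nonneg (ha n) _)
  rw [fbBlock]
  exact Real.rpow_le_rpow hsum_nonneg hsum (by positivity)

end Aux

/-- If `1 ≤ p < ∞` and `(s-1)p ≤ -1` (including the endpoint `(s-1)p = -1`), then
almost surely `sup_j ( Σ_{|n|∼2^j} ⟨n⟩^{sp} |n|^{-p} |gₙ|^p )^{1/p} < ∞`, i.e. the
Fourier–Wiener series belongs a.s. to `b̂^s_{p,∞}(𝕋)`. -/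
theorem brownian_in_FourierBesov_qInfty
    {Ω : Type*} [MeasurableSpace Ω] (P : Measure Ω) [IsProbabilityMeasure P]
    (g : ℤ → Ω → ℂ) (hg : IsStdComplexGaussianFamily P g)
    (p s : ℝ) (hp : 1 ≤ p) (hsp : (s - 1) * p ≤ -1) :
    ∀ᵐ ω ∂P,
      BddAbove (Set.range fun j : ℕ =>
        fbBlock (fun n => ‖g n ω‖) p s j) := by
  classical
  obtain ⟨hind, hmap⟩ := hg
  have hp0 : (0:ℝ) ≤ p := le_trans zero_le_one hp
  set f : {n : ℤ // n ≠ 0} × Bool → Ω → ℝ := fun i ω =>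
    if i.2 then (g (i.1 : ℤ) ω).re else (g (i.1 : ℤ) ω).im with hf
  have hae : ∀ i, AEMeasurable (f i) P := by
    intro i
    by_contra h
    have h2 := hmap i
    rw [show (fun ω => if i.2 then (g (i.1 : ℤ) ω).re else (g (i.1 : ℤ) ω).im) = f i from rfl,
      Measure.map_of_not_aemeasurable h] at h2
    exact (IsProbabilityMeasure.ne_zero (gaussianReal 0 1)) h2.symm
  set f' : {n : ℤ // n ≠ 0} × Bool → Ω → ℝ := fun i => (hae i).mk _ with hf'
  have hf'm : ∀ i, Measurable (f' i) := fun i => (hae i).measurable_mk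
  have hfeq : ∀ i, f i =ᵐ[P] f' i := fun i => (hae i).ae_eq_mk
  have hind' : iIndepFun (m := fun _ => (inferInstance : MeasurableSpace ℝ)) f' P :=
    myIIndepFun_congr hind hfeq
  have hmap' : ∀ i, P.map (f' i) = gaussianReal 0 1 := by
    intro i
    rw [← Measure.map_congr (hfeq i)]
    exact hmap i
  -- the enumeration
  set e : ℕ → {n : ℤ // n ≠ 0} := fun k => ⟨myEnum k, myEnum_ne_zero k⟩ with he
  have he_inj : Function.Injective e := fun k l h =>
    myEnum_injective (congrArg Subtype.val h)
  -- the function φ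
  set φ : ℝ × ℝ → ℝ := fun v => Real.sqrt (v.1 ^ 2 + v.2 ^ 2) ^ p with hφ
  have hφm : Measurable φ := by
    have h1 : Measurable fun v : ℝ × ℝ => Real.sqrt (v.1 ^ 2 + v.2 ^ 2) :=
      Real.continuous_sqrt.measurable.comp
        ((measurable_fst.pow_const 2).add (measurable_snd.pow_const 2))
    exact (Real.continuous_rpow_const hp0).measurable.comp h1
  -- the iid sequence
  set X : ℕ → Ω → ℝ := fun k ω => φ (f' (e k, true) ω, f' (e k, false) ω) with hX
  have hXindep : Pairwise (Function.onFun (IndepFun · · P) X) := by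
    intro k l hkl
    have hne : e k ≠ e l := fun h => hkl (he_inj h)
    have h4 := hind'.indepFun_prodMk_prodMk hf'm (e k, true) (e k, false)
      (e l, true) (e l, false)
      (fun h => hne (congrArg Prod.fst h)) (by simp [Prod.ext_iff])
      (by simp [Prod.ext_iff]) (fun h => hne (congrArg Prod.fst h))
    exact h4.comp hφm hφm
  have hpm : ∀ n : {n : ℤ // n ≠ 0},
      P.map (fun ω => (f' (n, true) ω, f' (n, false) ω))
        = (gaussianReal 0 1).prod (gaussianReal 0 1) := by
    intro n
    have hi : IndepFun (f' (n, true)) (f' (n, false)) P :=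
      hind'.indepFun (by simp)
    rw [indepFun_iff_map_prod_eq_prod_map_map (hf'm _).aemeasurable
      (hf'm _).aemeasurable] at hi
    rw [hi, hmap' (n, true), hmap' (n, false)]
  have hident : ∀ k, IdentDistrib (X k) (X 0) P P := by
    intro k
    have hpair : IdentDistrib (fun ω => (f' (e k, true) ω, f' (e k, false) ω))
        (fun ω => (f' (e 0, true) ω, f' (e 0, false) ω)) P P :=
      ⟨((hf'm _).prodMk (hf'm _)).aemeasurable,
       ((hf'm _).prodMk (hf'm _)).aemeasurable, by rw [hpm, hpm]⟩
    exact hpair.comp hφm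
  -- integrability
  have hint : Integrable (X 0) P := by
    have h1 : Integrable φ ((gaussianReal 0 1).prod (gaussianReal 0 1)) := by
      have hmom : Integrable (fun x : ℝ => |x| ^ p) (gaussianReal 0 1) := myGaussMoment hp0
      have hfstmap : ((gaussianReal 0 1).prod (gaussianReal 0 1)).map Prod.fst
          = gaussianReal 0 1 := by
        rw [Measure.map_fst_prod]
        simp
      have hsndmap : ((gaussianReal 0 1).prod (gaussianReal 0 1)).map Prod.snd
          = gaussianReal 0 1 := by
        rw [Measure.map_snd_prod]
        simp
      have ha : Integrable (fun v : ℝ × ℝ => |v.1| ^ p)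
          ((gaussianReal 0 1).prod (gaussianReal 0 1)) := by
        have := (integrable_map_measure
          (μ := (gaussianReal 0 1).prod (gaussianReal 0 1)) (f := Prod.fst)
          (g := fun x : ℝ => |x| ^ p)
          (by rw [hfstmap]; exact hmom.1) measurable_fst.aemeasurable).1
          (by rw [hfstmap]; exact hmom)
        exact this
      have hb : Integrable (fun v : ℝ × ℝ => |v.2| ^ p)
          ((gaussianReal 0 1).prod (gaussianReal 0 1)) := by
        have := (integrable_map_measure
          (μ := (gaussianReal 0 1).prod (gaussianReal 0 1)) (f := Prod.snd)
          (g := fun x : ℝ => |x| ^ p)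
          (by rw [hsndmap]; exact hmom.1) measurable_snd.aemeasurable).1
          (by rw [hsndmap]; exact hmom)
        exact this
      refine Integrable.mono' (((ha.add hb).const_mul ((2:ℝ) ^ p)))
        hφm.aestronglyMeasurable ?_
      refine Filter.Eventually.of_forall fun v => ?_
      rw [Real.norm_eq_abs, abs_of_nonneg (Real.rpow_nonneg (Real.sqrt_nonneg _) _)]
      exact myPhiBound hp0 v.1 v.2
    have := (integrable_map_measure
      (μ := P) (f := fun ω => (f' (e 0, true) ω, f' (e 0, false) ω)) (g := φ)
      (by rw [hpm]; exact h1.1) ((hf'm _).prodMk (hf'm _)).aemeasurable).1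
      (by rw [hpm]; exact h1)
    exact this
  -- strong law of large numbers
  have hslln := strong_law_ae_real X hint hXindep hident
  have hae2 : ∀ᵐ ω ∂P, ∀ i, f i ω = f' i ω := ae_all_iff.2 hfeq
  filter_upwards [hslln, hae2] with ω hω hωf
  obtain ⟨S, hS⟩ := hω.bddAbove_range
  refine ⟨(2 ^ (|s| * p / 2) * (4 * S)) ^ (1 / p), ?_⟩
  rintro y ⟨j, rfl⟩
  refine myBlock_bound hp hsp _ (fun n => norm_nonneg _) (fun k => X k ω)
    ?_ ?_ S ?_ j
  · -- a n ^ p = X (myIdx n) ω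
    intro n hn
    have hen : e (myIdx n) = ⟨n, hn⟩ := Subtype.ext (myEnum_myIdx hn)
    have ht : f' (e (myIdx n), true) ω = (g n ω).re := by
      rw [hen, ← hωf (⟨n, hn⟩, true)]
      rfl
    have hi : f' (e (myIdx n), false) ω = (g n ω).im := by
      rw [hen, ← hωf (⟨n, hn⟩, false)]
      rfl
    show ‖g n ω‖ ^ p = φ (f' (e (myIdx n), true) ω, f' (e (myIdx n), false) ω)
    rw [ht, hi, hφ]
    simp only [Complex.norm_def, Complex.normSq_apply]
    congr 2
    ring
  · exact fun k => Real.rpow_nonneg (Real.sqrt_nonneg _) _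
  · intro N
    exact hS (Set.mem_range_self N)
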